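/- Let H and F be Hermitian matrices over ℂ and let ψ be a unit vector with Fψ = 0. Set A = i[H,F] = i(HF − FH), which is Hermitian, and define g : ℝ → ℝ by g(θ) = ⟨exp(−iθA)ψ, H exp(−iθA)ψ⟩. Then g is differentiable at 0 with g'(0) = −2·⟨ψ, H F H ψ⟩. In particular, if additionally F ⪰ I − |ψ⟩⟨ψ|, then g'(0) ≤ −2·Var_ψ(H), where Var_ψ(H) = ⟨ψ, H²ψ⟩ − ⟨ψ, Hψ⟩². -/

import Mathlib

open Matrix
open scoped ComplexOrder

attribute [local instance] Matrix.linftyOpNormedRing Matrix.linftyOpNormedAlgebra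

/-- **First-order energy decrease of the deep approximation circuit.**
Let `H, F` be Hermitian matrices over `ℂ` and `ψ` a unit vector with `F ψ = 0`.  Set
`A = i[H,F]`, which is Hermitian, and let `g(θ) = ⟨e^{−iθA} ψ| H |e^{−iθA} ψ⟩`.  Then `g` is
differentiable at `0` with `g'(0) = −2 ⟨ψ| H F H |ψ⟩`; in particular, if moreover
`F ⪰ I − |ψ⟩⟨ψ|`, then `g'(0) ≤ −2 Var_ψ(H)` with `Var_ψ(H) = ⟨ψ|H²|ψ⟩ − ⟨ψ|H|ψ⟩²`. -/
theorem deep_circuit_energy_derivative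
    {ι : Type*} [Fintype ι] [DecidableEq ι]
    (H F : Matrix ι ι ℂ) (hH : H.IsHermitian) (hF : F.IsHermitian)
    (ψ : ι → ℂ) (hψ : ∑ x, ‖ψ x‖ ^ 2 = 1) (hker : F *ᵥ ψ = 0)
    (A : Matrix ι ι ℂ) (hA : A = Complex.I • (H * F - F * H))
    (g : ℝ → ℝ)
    (hg : ∀ θ : ℝ,
      g θ = (star (NormedSpace.exp ((-(Complex.I * θ)) • A) *ᵥ ψ)
              ⬝ᵥ H *ᵥ (NormedSpace.exp ((-(Complex.I * θ)) • A) *ᵥ ψ)).re) :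
    A.IsHermitian ∧
    HasDerivAt g (-2 * (star ψ ⬝ᵥ (H * F * H) *ᵥ ψ).re) 0 ∧
    ((F - (1 - vecMulVec ψ (star ψ))).PosSemidef →
      -2 * (star ψ ⬝ᵥ (H * F * H) *ᵥ ψ).re
        ≤ -2 * ((star ψ ⬝ᵥ (H * H) *ᵥ ψ).re - ((star ψ ⬝ᵥ H *ᵥ ψ).re) ^ 2)) := by
  have key : ∀ (M : Matrix ι ι ℂ) (x y : ι → ℂ),
      star (M *ᵥ x) ⬝ᵥ y = star x ⬝ᵥ (Mᴴ *ᵥ y) := by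
    intro M x y
    rw [Matrix.star_mulVec, ← Matrix.dotProduct_mulVec]
  -- Part 1 : A is Hermitian
  have hAH : A.IsHermitian := by
    show Aᴴ = A
    rw [hA, conjTranspose_smul, conjTranspose_sub, conjTranspose_mul, conjTranspose_mul,
      hH.eq, hF.eq]
    rw [Complex.star_def, Complex.conj_I]
    rw [show (F * H - H * F) = -(H * F - F * H) from (neg_sub _ _).symm, smul_neg, neg_smul, neg_neg]
  -- Part 2 : the derivative
  set B : Matrix ι ι ℂ := (-Complex.I) • A with hBdef
  have hB : B = H * F - F * H := by
    rw [hBdef, hA, smul_smul]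
    norm_num [Complex.I_mul_I]
  have hE : HasDerivAt (fun θ : ℝ => NormedSpace.exp (θ • B)) B 0 := by
    have h := hasDerivAt_exp_smul_const (𝕂 := ℝ) B 0
    simp only [zero_smul, NormedSpace.exp_zero, one_mul] at h
    exact h
  have hfun : ∀ θ : ℝ, ((-(Complex.I * θ)) • A : Matrix ι ι ℂ) = θ • B := by
    intro θ
    ext i j
    simp [hBdef, Matrix.smul_apply]
    ring
  have hEntry : ∀ i j : ι, HasDerivAt (fun θ : ℝ => NormedSpace.exp (θ • B) i j) (B i j) 0 := by
    intro i j
    let L : Matrix ι ι ℂ →ₗ[ℝ] ℂ :=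
      { toFun := fun M => M i j, map_add' := fun _ _ => rfl, map_smul' := fun _ _ => rfl }
    exact (LinearMap.toContinuousLinearMap L).hasFDerivAt.comp_hasDerivAt 0 hE
  have hu : ∀ i : ι, HasDerivAt (fun θ : ℝ => (NormedSpace.exp (θ • B) *ᵥ ψ) i)
      ((B *ᵥ ψ) i) 0 := by
    intro i
    simp only [Matrix.mulVec, dotProduct]
    exact HasDerivAt.fun_sum fun j _ => (hEntry i j).mul_const (ψ j)
  have h0 : ∀ i, (NormedSpace.exp ((0:ℝ) • B) *ᵥ ψ) i = ψ i := by
    intro i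
    rw [zero_smul, NormedSpace.exp_zero, Matrix.one_mulVec]
  set w := B *ᵥ ψ with hwdef
  have hG : HasDerivAt
      (fun θ : ℝ => ∑ i, star ((NormedSpace.exp (θ • B) *ᵥ ψ) i) *
        ∑ j, H i j * (NormedSpace.exp (θ • B) *ᵥ ψ) j)
      (∑ i, (star (w i) * ∑ j, H i j * ψ j + star (ψ i) * ∑ j, H i j * w j)) 0 := by
    apply HasDerivAt.fun_sum
    intro i _
    have h1 := (hu i).star
    have h2 : HasDerivAt (fun θ : ℝ => ∑ j, H i j * (NormedSpace.exp (θ • B) *ᵥ ψ) j)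
        (∑ j, H i j * w j) 0 := HasDerivAt.fun_sum fun j _ => (hu j).const_mul (H i j)
    have h3 := h1.fun_mul h2
    simpa [h0] using h3
  have hwval : w = -(F *ᵥ (H *ᵥ ψ)) := by
    rw [hwdef, hB, Matrix.sub_mulVec, ← Matrix.mulVec_mulVec, ← Matrix.mulVec_mulVec, hker,
      Matrix.mulVec_zero, zero_sub]
  have t1 : star (F *ᵥ (H *ᵥ ψ)) ⬝ᵥ (H *ᵥ ψ) = star ψ ⬝ᵥ (H * F * H) *ᵥ ψ := by
    simp [key, hH.eq, hF.eq, Matrix.mulVec_mulVec, Matrix.mul_assoc]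
  have t2 : star ψ ⬝ᵥ (H *ᵥ (F *ᵥ (H *ᵥ ψ))) = star ψ ⬝ᵥ (H * F * H) *ᵥ ψ := by
    simp [Matrix.mulVec_mulVec, Matrix.mul_assoc]
  have hd : (∑ i, (star (w i) * ∑ j, H i j * ψ j + star (ψ i) * ∑ j, H i j * w j))
      = -2 * (star ψ ⬝ᵥ (H * F * H) *ᵥ ψ) := by
    have hsplit : (∑ i, (star (w i) * ∑ j, H i j * ψ j + star (ψ i) * ∑ j, H i j * w j))
        = star w ⬝ᵥ (H *ᵥ ψ) + star ψ ⬝ᵥ (H *ᵥ w) := by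
      rw [Finset.sum_add_distrib]
      rfl
    rw [hsplit, hwval, star_neg, neg_dotProduct, Matrix.mulVec_neg, dotProduct_neg,
      t1, t2]
    ring
  rw [hd] at hG
  have hgd : HasDerivAt g (-2 * (star ψ ⬝ᵥ (H * F * H) *ᵥ ψ).re) 0 := by
    have hgeq : g = fun θ : ℝ => ((∑ i, star ((NormedSpace.exp (θ • B) *ᵥ ψ) i) *
        ∑ j, H i j * (NormedSpace.exp (θ • B) *ᵥ ψ) j : ℂ)).re := by
      funext θ
      rw [hg θ, hfun θ]
      rfl
    rw [hgeq]
    have hcomp := Complex.reCLM.hasFDerivAt.comp_hasDerivAt 0 hG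
    have : (Complex.reCLM (-2 * (star ψ ⬝ᵥ (H * F * H) *ᵥ ψ)))
        = -2 * (star ψ ⬝ᵥ (H * F * H) *ᵥ ψ).re := by
      simp [Complex.mul_re]
    rw [this] at hcomp
    exact hcomp
  refine ⟨hAH, hgd, ?_⟩
  -- Part 3 : the inequality
  intro hP
  set x := H *ᵥ ψ with hx
  have key2 := hP.dotProduct_mulVec_nonneg x
  have ha : star x ⬝ᵥ (F *ᵥ x) = star ψ ⬝ᵥ (H * F * H) *ᵥ ψ := by
    rw [hx, key H, hH.eq]
    simp [Matrix.mulVec_mulVec, Matrix.mul_assoc]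
  have hb : star x ⬝ᵥ x = star ψ ⬝ᵥ (H * H) *ᵥ ψ := by
    conv_lhs => rw [hx, key H, hH.eq]
    simp [Matrix.mulVec_mulVec]
  have hvv : vecMulVec ψ (star ψ) *ᵥ x = (star ψ ⬝ᵥ x) • ψ := by
    ext i
    simp [Matrix.vecMulVec_apply, Matrix.mulVec, dotProduct, Finset.sum_mul,
      Finset.mul_sum]
    exact Finset.sum_congr rfl fun j _ => by ring
  set t := star ψ ⬝ᵥ x with htdef
  have htconj' : star x ⬝ᵥ ψ = star t := by
    rw [Matrix.star_dotProduct]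
  have htconj : star t = t := by
    rw [← htconj', hx, key, hH.eq, htdef, hx]
  have htim : t.im = 0 := by
    have h := congrArg Complex.im htconj
    simp only [Complex.star_def, Complex.conj_im] at h
    linarith
  have hc : star x ⬝ᵥ (vecMulVec ψ (star ψ) *ᵥ x) = t * star t := by
    rw [hvv, dotProduct_smul, smul_eq_mul, htconj', htdef]
  have hexp : star x ⬝ᵥ ((F - (1 - vecMulVec ψ (star ψ))) *ᵥ x)
      = star x ⬝ᵥ (F *ᵥ x) - (star x ⬝ᵥ x - t * star t) := by
    rw [Matrix.sub_mulVec, Matrix.sub_mulVec, Matrix.one_mulVec, dotProduct_sub,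
      dotProduct_sub, hc]
  rw [hexp] at key2
  rw [Complex.le_def] at key2
  have hre := key2.1
  simp only [Complex.zero_re, Complex.sub_re, Complex.mul_re, Complex.star_def, Complex.conj_re,
    Complex.conj_im, htim, zero_mul, mul_zero, sub_zero, neg_zero] at hre
  rw [ha, hb] at hre
  have htre : t.re = (star ψ ⬝ᵥ H *ᵥ ψ).re := by rw [htdef, hx]
  rw [← htre]
  nlinarith [hre]
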